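/- There exists a constant C > 0 such that for all integers d ≥ 3 and M ≥ 3, the maximal effective resistance of the d-dimensional toroidal grid satisfies R_max(T_{M^d}) ≤ C/d and R_max(T_{M^d}) ≥ 1/(C d); that is, max over v ∈ {0,...,M-1}^d, v ≠ 0, of M^{-d} Σ_{k ∈ {0,...,M-1}^d, k ≠ 0} (2 - 2cos(2π (Σ_{i=1}^d k_i v_i)/M)) · (2d - 2 Σ_{i=1}^d cos(2π k_i / M))^{-1} lies between 1/(Cd) and C/d. -/

import Mathlib

open Real Finset

/-- Effective resistance between vertex `0` and vertex `v ∈ {0,...,M-1}^d` in the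
`d`-dimensional toroidal grid `T_{M^d}` (spectral/Fourier formula). -/
noncomputable def ReffTorus (d M : ℕ) (v : Fin d → ℕ) : ℝ :=
  (1 / (M : ℝ) ^ d) *
    ∑ k ∈ (Fintype.piFinset fun _ : Fin d => Finset.range M).filter (· ≠ 0),
      (2 - 2 * Real.cos (2 * π * (∑ i, (k i : ℝ) * (v i : ℝ)) / M)) *
        (2 * d - 2 * ∑ i, Real.cos (2 * π * k i / M))⁻¹

/-- Maximal effective resistance of `T_{M^d}`: the maximum of `R_eff(0,v)` over
nonzero vertices `v`. -/
noncomputable def RmaxTorus (d M : ℕ) : ℝ :=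
  sSup (ReffTorus d M ''
    {v : Fin d → ℕ | v ∈ Fintype.piFinset (fun _ : Fin d => Finset.range M) ∧ v ≠ 0})

namespace CRRST


lemma one_sub_cos_eq (x : ℝ) : 1 - Real.cos x = 2 * Real.sin (x/2)^2 := by
  have h1 : Real.cos (2 * (x/2)) = 2 * Real.cos (x/2)^2 - 1 := Real.cos_two_mul _
  have h2 : Real.sin (x/2)^2 + Real.cos (x/2)^2 = 1 := Real.sin_sq_add_cos_sq _
  have : (2:ℝ) * (x/2) = x := by ring
  rw [this] at h1
  nlinarith

/-- wrapped distance -/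
def mm (M a : ℕ) : ℕ := min a (M - a)

noncomputable def g (M a : ℕ) : ℝ := 1 - Real.cos (2 * π * a / M)

lemma g_nonneg (M a : ℕ) : 0 ≤ g M a := by
  have := Real.cos_le_one (2 * π * a / M); unfold g; linarith

lemma g_le_two (M a : ℕ) : g M a ≤ 2 := by
  have := Real.neg_one_le_cos (2 * π * a / M); unfold g; linarith

lemma g_fold {M a : ℕ} (hM : 0 < M) (ha : a < M) :
    g M a = 1 - Real.cos (2 * π * (mm M a) / M) := by
  rcases le_or_gt a (M - a) with h | h
  · rw [mm, min_eq_left h]; rfl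
  · rw [mm, min_eq_right h.le]
    have haM : (a : ℝ) ≤ M := by exact_mod_cast ha.le
    have hcast : ((M - a : ℕ) : ℝ) = (M : ℝ) - a := by
      have : a ≤ M := ha.le
      push_cast [this]; ring
    have hM0 : (M : ℝ) ≠ 0 := by positivity
    have harg : 2 * π * ((M - a : ℕ) : ℝ) / M = 2 * π - 2 * π * a / M := by
      rw [hcast]; field_simp
    rw [g, harg, Real.cos_two_pi_sub]

lemma mm_le_half {M a : ℕ} : 2 * mm M a ≤ M := by
  rcases le_or_gt a (M - a) with h | h
  · rw [mm, min_eq_left h]; omega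
  · rw [mm, min_eq_right h.le]; omega

/-- main lower bound on g via Jordan inequality -/
lemma g_ge_sq {M a : ℕ} (hM : 0 < M) (ha : a < M) :
    8 * (mm M a : ℝ)^2 / (M:ℝ)^2 ≤ g M a := by
  rw [g_fold hM ha]
  set m := mm M a with hm
  have hmhalf : (2 * m : ℝ) ≤ M := by exact_mod_cast mm_le_half (M := M) (a := a)
  have hMpos : (0:ℝ) < M := by exact_mod_cast hM
  have hmnn : (0:ℝ) ≤ m := by positivity
  have harg : (0:ℝ) ≤ 2 * π * m / M := by positivity
  rw [one_sub_cos_eq]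
  have hhalf : 2 * π * (m:ℝ) / M / 2 = π * m / M := by ring
  rw [hhalf]
  have hx0 : (0:ℝ) ≤ π * m / M := by positivity
  have hx1 : π * (m:ℝ) / M ≤ π / 2 := by
    rw [div_le_div_iff₀ hMpos (by norm_num : (0:ℝ) < 2)]
    nlinarith [Real.pi_pos]
  have hsin := Real.mul_le_sin hx0 hx1
  have h2pi : 2 / π * (π * (m:ℝ) / M) = 2 * m / M := by
    field_simp
  rw [h2pi] at hsin
  have hsq : (2 * (m:ℝ) / M)^2 ≤ Real.sin (π * m / M)^2 := by
    have h0 : (0:ℝ) ≤ 2 * m / M := by positivity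
    exact pow_le_pow_left₀ h0 hsin 2
  have : (2 * (m:ℝ) / M)^2 = 4 * (m:ℝ)^2 / (M:ℝ)^2 := by field_simp; ring
  rw [this] at hsq
  have hh : 8 * (m:ℝ)^2 / (M:ℝ)^2 = 2 * (4 * (m:ℝ)^2 / (M:ℝ)^2) := by ring
  rw [hh]; linarith

lemma g_pos {M a : ℕ} (hM : 0 < M) (ha : a < M) (ha1 : 1 ≤ a) : 0 < g M a := by
  have h1 : 1 ≤ mm M a := by unfold mm; omega
  have := g_ge_sq hM ha
  have hMpos : (0:ℝ) < M := by exact_mod_cast hM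
  have hmr : (1:ℝ) ≤ (mm M a : ℝ) := by exact_mod_cast h1
  have hpos : (0:ℝ) < 8 * (mm M a : ℝ)^2 / (M:ℝ)^2 := by
    apply div_pos (by nlinarith) (by positivity)
  linarith

/-- for "big" a (8 * mm ≥ M), g ≥ 1/4 -/
lemma g_ge_eighth {M a : ℕ} (hM : 0 < M) (ha : a < M) (hbig : M ≤ 8 * mm M a) :
    1/8 ≤ g M a := by
  have := g_ge_sq hM ha
  have hMpos : (0:ℝ) < M := by exact_mod_cast hM
  have hb : (M:ℝ) ≤ 8 * mm M a := by exact_mod_cast hbig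
  have h2 : (M:ℝ)^2 ≤ 64 * (mm M a : ℝ)^2 := by nlinarith
  have : 8 * (mm M a : ℝ)^2 / (M:ℝ)^2 ≥ 1/8 := by
    rw [ge_iff_le, le_div_iff₀ (by positivity)]; nlinarith
  linarith


lemma sum_cos_eq_zero {M : ℕ} (hM : 3 ≤ M) :
    ∑ a ∈ range M, Real.cos (2 * π * a / M) = 0 := by
  have hM0 : (M:ℂ) ≠ 0 := by exact_mod_cast (by omega : M ≠ 0)
  set z : ℂ := Complex.exp (2 * ↑π * Complex.I / M) with hz
  have hzM : z ^ M = 1 := by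
    rw [hz, ← Complex.exp_nat_mul]
    have : (M:ℂ) * (2 * ↑π * Complex.I / M) = 2 * ↑π * Complex.I := by
      field_simp
    rw [this, Complex.exp_two_pi_mul_I]
  have hz1 : z ≠ 1 := by
    intro h
    rw [hz, Complex.exp_eq_one_iff] at h
    obtain ⟨n, hn⟩ := h
    have h2 : (2 * ↑π * Complex.I) ≠ 0 := by
      simp [Complex.I_ne_zero, Real.pi_ne_zero]
    have hmul : 2 * ↑π * Complex.I = (n:ℂ) * (2 * ↑π * Complex.I) * M := by
      have := congrArg (fun w => w * (M:ℂ)) hn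
      simpa [div_mul_cancel₀ _ hM0] using this
    have h1nm : ((n * M : ℤ) : ℂ) * (2 * ↑π * Complex.I) = (1:ℂ) * (2 * ↑π * Complex.I) := by
      push_cast; linear_combination -hmul
    have : ((n * M : ℤ) : ℂ) = ((1:ℤ) : ℂ) := by
      have := mul_right_cancel₀ h2 h1nm; simpa using this
    have : (1:ℤ) = n * M := by exact_mod_cast this.symm
    have hdvd : (M:ℤ) ∣ 1 := Dvd.intro n (by linarith)
    have := Int.le_of_dvd one_pos hdvd
    omega
  have hgeom : ∑ a ∈ range M, z ^ a = 0 := by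
    rw [geom_sum_eq hz1, hzM]; simp
  have hre : ∀ a ∈ range M, Real.cos (2 * π * a / M) = (z ^ a).re := by
    intro a _
    rw [hz, ← Complex.exp_nat_mul]
    have : (a:ℂ) * (2 * ↑π * Complex.I / M) = ((2 * π * a / M : ℝ) : ℂ) * Complex.I := by
      push_cast; ring
    rw [this, Complex.exp_ofReal_mul_I_re]
  rw [Finset.sum_congr rfl hre, ← Complex.re_sum, hgeom, Complex.zero_re]


/-- values with wrapped distance ≤ r -/
lemma card_le_filter_mm_le {M : ℕ} (hM : 1 ≤ M) (r : ℕ) :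
    #((range M).filter (fun a => mm M a ≤ r)) ≤ 2 * r + 1 := by
  classical
  have hsub : (range M).filter (fun a => mm M a ≤ r) ⊆
      range (r+1) ∪ Icc (M - r) (M - 1) := by
    intro a ha
    rw [Finset.mem_filter, Finset.mem_range] at ha
    obtain ⟨haM, hmm⟩ := ha
    rw [Finset.mem_union, Finset.mem_range, Finset.mem_Icc]
    rw [mm] at hmm
    rcases le_total a (M - a) with h | h
    · left; rw [min_eq_left h] at hmm; omega
    · rw [min_eq_right h] at hmm; omega
  calc #((range M).filter (fun a => mm M a ≤ r)) ≤ #(range (r+1) ∪ Icc (M - r) (M - 1)) :=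
        Finset.card_le_card hsub
    _ ≤ #(range (r+1)) + #(Icc (M - r) (M - 1)) := Finset.card_union_le _ _
    _ ≤ (r + 1) + r := by
        rw [Finset.card_range, Nat.card_Icc]; omega
    _ = 2 * r + 1 := by omega

lemma card_exact_mm (M r : ℕ) :
    #((range M).filter (fun a => mm M a = r)) ≤ 2 := by
  classical
  have hsub : (range M).filter (fun a => mm M a = r) ⊆ {r, M - r} := by
    intro a ha
    rw [Finset.mem_filter, Finset.mem_range] at ha
    obtain ⟨haM, hmm⟩ := ha
    rw [mm] at hmm
    rw [Finset.mem_insert, Finset.mem_singleton]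
    rcases le_total a (M - a) with h | h
    · left; rw [min_eq_left h] at hmm; omega
    · rw [min_eq_right h] at hmm; omega
  calc #((range M).filter (fun a => mm M a = r)) ≤ #({r, M - r} : Finset ℕ) :=
        Finset.card_le_card hsub
    _ ≤ 2 := Finset.card_insert_le _ _ |>.trans (by simp)

/-- count of "small" values -/
lemma card_small_le {M : ℕ} (hM : 3 ≤ M) :
    12 * #((range M).filter (fun a => 8 * mm M a < M)) ≤ 7 * M := by
  classical
  set t := (M - 1) / 8 with ht
  have h8t : 8 * t ≤ M - 1 := by
    rw [ht]; omega
  have hsame : (range M).filter (fun a => 8 * mm M a < M)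
      = (range M).filter (fun a => mm M a ≤ t) := by
    apply Finset.filter_congr
    intro a _
    constructor
    · intro h; omega
    · intro h; omega
  rw [hsame]
  have := card_le_filter_mm_le (show 1 ≤ M by omega) t
  omega

lemma card_big_ge {M : ℕ} (hM : 3 ≤ M) :
    5 * M ≤ 12 * #((range M).filter (fun a => M ≤ 8 * mm M a)) := by
  classical
  have hpart := Finset.card_filter_add_card_filter_not
    (s := range M) (p := fun a => M ≤ 8 * mm M a)
  have hsmall := card_small_le hM
  have heq : (range M).filter (fun a => ¬ M ≤ 8 * mm M a)
      = (range M).filter (fun a => 8 * mm M a < M) := by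
    apply Finset.filter_congr; intro a _; simp [Nat.not_le]
  rw [heq] at hpart
  rw [Finset.card_range] at hpart
  omega

/-- ℕ power fact: d^2 * 3^(d-2) ≤ 4 * 8^(d-2), in shifted form -/
lemma pow_fact (e : ℕ) : 3^(e+1) * (e+3)^2 ≤ 4 * 8^(e+1) := by
  induction e with
  | zero => norm_num
  | succ e ih =>
    have h9 : 9 * (e+4)^2 ≤ 16 * (e+3)^2 := by nlinarith [sq_nonneg e, Nat.zero_le e]
    have key : 9 * (3^(e+2) * (e+4)^2) ≤ 9 * (4 * 8^(e+2)) := by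
      have h1 : 9 * (3^(e+2) * (e+4)^2) = 3^(e+1) * 3 * (9 * (e+4)^2) := by ring
      have h2 : 3^(e+1) * 3 * (9 * (e+4)^2) ≤ 3^(e+1) * 3 * (16 * (e+3)^2) :=
        Nat.mul_le_mul_left _ h9
      have h3 : 3^(e+1) * 3 * (16 * (e+3)^2) = 48 * (3^(e+1) * (e+3)^2) := by ring
      have h4 : 48 * (3^(e+1) * (e+3)^2) ≤ 48 * (4 * 8^(e+1)) :=
        Nat.mul_le_mul_left _ ih
      have h5 : 48 * (4 * 8^(e+1)) ≤ 9 * (4 * 8^(e+2)) := by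
        have : 9 * (4 * 8^(e+2)) = 288 * 8^(e+1) := by ring
        rw [this]
        have : 48 * (4 * 8^(e+1)) = 192 * 8^(e+1) := by ring
        rw [this]
        exact Nat.mul_le_mul_right _ (by norm_num)
      omega
    exact Nat.le_of_mul_le_mul_left key (by norm_num)


-- ℕ helper: binomial sub-sum bound
lemma binom_sum_le2 (d b s : ℕ) :
    ∑ N ∈ range d, (d+1).choose (N+2) * (b^(N+2) * s^(d-(N+1))) ≤ (b+s)^(d+1) := by
  have hinj : Set.InjOn (· + 2) (range d) := fun x _ y _ h => by dsimp at h; omega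
  have himg : ∑ j ∈ (range d).image (· + 2), b^j * s^(d+1-j) * (d+1).choose j
      = ∑ N ∈ range d, b^(N+2) * s^(d+1-(N+2)) * (d+1).choose (N+2) :=
    Finset.sum_image (fun x hx y hy h => hinj hx hy h)
  have hterm : ∀ N ∈ range d,
      b^(N+2) * s^(d+1-(N+2)) * (d+1).choose (N+2)
        = (d+1).choose (N+2) * (b^(N+2) * s^(d-(N+1))) := by
    intro N hN
    have : d + 1 - (N+2) = d - (N+1) := by omega
    rw [this]; ring
  have hsub : (range d).image (· + 2) ⊆ range (d+1+1) := by
    intro j hj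
    rw [Finset.mem_image] at hj
    obtain ⟨N, hN, rfl⟩ := hj
    rw [Finset.mem_range] at *
    omega
  have hpow := add_pow b s (d+1)
  simp only [Nat.cast_id] at hpow
  calc ∑ N ∈ range d, (d+1).choose (N+2) * (b^(N+2) * s^(d-(N+1)))
      = ∑ j ∈ (range d).image (· + 2), b^j * s^(d+1-j) * (d+1).choose j := by
        rw [himg]; exact (Finset.sum_congr rfl hterm).symm
    _ ≤ ∑ j ∈ range (d+1+1), b^j * s^(d+1-j) * (d+1).choose j :=
        Finset.sum_le_sum_of_subset hsub
    _ = (b+s)^(d+1) := hpow.symm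

-- choose ratio inequality in ℕ
lemma choose_ratio (d N : ℕ) :
    8 * ((d+1) * d.choose (N+1)) ≤ 16 * ((N+1) * (d+1).choose (N+2)) := by
  have h := Nat.add_one_mul_choose_eq d (N+1)
  -- succ d * choose d (N+1) = choose (d+1) (N+2) * (N+2)
  have h2 : (d+1) * d.choose (N+1) = (d+1).choose (N+2) * (N+2) := h
  rw [h2]
  have : 8 * ((d+1).choose (N+2) * (N+2)) = (d+1).choose (N+2) * (8*(N+2)) := by ring
  rw [this]
  have : 16 * ((N+1) * (d+1).choose (N+2)) = (d+1).choose (N+2) * (16*(N+1)) := by ring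
  rw [this]
  exact Nat.mul_le_mul_left _ (by omega)

lemma sum_piFinset_comp_apply {d M : ℕ} [NeZero d] (F : ℕ → ℝ) :
    ∑ k ∈ Fintype.piFinset (fun _ : Fin d => range M), F (k 0)
      = (M:ℝ)^(d-1) * ∑ a ∈ range M, F a := by
  classical
  have h := Finset.prod_univ_sum (fun _ : Fin d => range M)
      (fun (i : Fin d) (a : ℕ) => if i = 0 then F a else (1:ℝ))
  have hL : (∏ i : Fin d, ∑ a ∈ range M, if i = 0 then F a else (1:ℝ))
      = (∑ a ∈ range M, F a) * (M:ℝ)^(d-1) := by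
    rw [← Finset.mul_prod_erase univ _ (mem_univ (0 : Fin d))]
    have h2 : ∀ i ∈ univ.erase (0:Fin d),
        (∑ a ∈ range M, if i = 0 then F a else (1:ℝ)) = (M:ℝ) := by
      intro i hi; rw [Finset.mem_erase] at hi; simp [hi.1]
    rw [Finset.prod_congr rfl h2, Finset.prod_const,
      Finset.card_erase_of_mem (mem_univ _), card_univ, Fintype.card_fin]
    simp
  have hR : ∀ x ∈ Fintype.piFinset (fun _ : Fin d => range M),
      (∏ i : Fin d, if i = 0 then F (x i) else (1:ℝ)) = F (x 0) := by
    intro x _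
    rw [← Finset.mul_prod_erase univ _ (mem_univ (0 : Fin d))]
    have h2 : ∀ i ∈ univ.erase (0:Fin d), (if i = 0 then F (x i) else (1:ℝ)) = 1 := by
      intro i hi; rw [Finset.mem_erase] at hi; simp [hi.1]
    rw [Finset.prod_congr rfl h2, Finset.prod_const_one]; simp
  rw [hL] at h
  rw [← Finset.sum_congr rfl hR, ← h, mul_comm]

lemma sum_g_pos {d M : ℕ} (hM : 3 ≤ M) {k : Fin d → ℕ}
    (hk : k ∈ Fintype.piFinset (fun _ : Fin d => range M)) (hk0 : k ≠ 0) :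
    0 < ∑ i, g M (k i) := by
  obtain ⟨i, hi⟩ := Function.ne_iff.mp hk0
  have hki : k i < M := by
    have := Fintype.mem_piFinset.mp hk i; simpa [Finset.mem_range] using this
  refine Finset.sum_pos' (fun j _ => g_nonneg M (k j)) ⟨i, mem_univ i, ?_⟩
  exact g_pos (by omega) hki (by simpa [Pi.zero_apply] using Nat.one_le_iff_ne_zero.mpr hi)

lemma denom_eq {d M : ℕ} (k : Fin d → ℕ) :
    2 * (d:ℝ) - 2 * ∑ i, Real.cos (2 * π * k i / M) = 2 * ∑ i, g M (k i) := by
  unfold g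
  rw [Finset.sum_sub_distrib, Finset.sum_const, card_univ, Fintype.card_fin]
  push_cast; ring

lemma reff_lower {d M : ℕ} [NeZero d] (hd : 3 ≤ d) (hM : 3 ≤ M) :
    1/(2*(d:ℝ)) ≤ ReffTorus d M (fun i => if i = (0 : Fin d) then 1 else 0) := by
  classical
  set K := Fintype.piFinset (fun _ : Fin d => range M) with hK
  set Ks := K.filter (· ≠ 0) with hKs
  set F : ℕ → ℝ := fun a => 2 - 2 * Real.cos (2 * π * a / M) with hF
  have hdpos : (0:ℝ) < d := by positivity
  have hMpos : (0:ℝ) < M := by exact_mod_cast (by omega : 0 < M)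
  -- rewrite the summand
  have hterm : ∀ k ∈ Ks,
      F (k 0) * (4 * (d:ℝ))⁻¹ ≤
      (2 - 2 * Real.cos (2 * π * (∑ i, (k i : ℝ) *
        (((fun i => if i = (0 : Fin d) then 1 else 0) i : ℕ) : ℝ)) / M)) *
        (2 * (d:ℝ) - 2 * ∑ i, Real.cos (2 * π * k i / M))⁻¹ := by
    intro k hk
    rw [hKs, Finset.mem_filter] at hk
    have hsum : (∑ i, (k i : ℝ) * (((if i = (0 : Fin d) then 1 else 0 : ℕ)) : ℝ))
        = (k 0 : ℝ) := by
      have : ∀ i : Fin d, (k i : ℝ) * (((if i = (0 : Fin d) then 1 else 0 : ℕ)) : ℝ)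
          = if i = 0 then (k i : ℝ) else 0 := by
        intro i; by_cases h : i = 0 <;> simp [h]
      rw [Finset.sum_congr rfl (fun i _ => this i), Finset.sum_ite_eq' univ (0 : Fin d)]
      simp
    simp only [hsum]
    rw [denom_eq k]
    have hpos := sum_g_pos hM hk.1 hk.2
    have hle : ∑ i, g M (k i) ≤ 2 * d := by
      calc ∑ i, g M (k i) ≤ ∑ _i : Fin d, (2:ℝ) :=
            Finset.sum_le_sum (fun i _ => g_le_two M (k i))
        _ = 2 * d := by rw [Finset.sum_const, card_univ, Fintype.card_fin]; push_cast; ring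
    have hinv : (4 * (d:ℝ))⁻¹ ≤ (2 * ∑ i, g M (k i))⁻¹ := by
      apply inv_anti₀ (by positivity)
      linarith
    have hFnn : 0 ≤ F (k 0) := by
      have := Real.cos_le_one (2 * π * (k 0) / M); rw [hF]; simp; linarith
    calc F (k 0) * (4 * (d:ℝ))⁻¹ ≤ F (k 0) * (2 * ∑ i, g M (k i))⁻¹ :=
          mul_le_mul_of_nonneg_left hinv hFnn
      _ = _ := by rw [hF]
  have hstep : ∑ k ∈ Ks, F (k 0) * (4 * (d:ℝ))⁻¹ ≤
      ∑ k ∈ Ks, (2 - 2 * Real.cos (2 * π * (∑ i, (k i : ℝ) *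
        (((fun i => if i = (0 : Fin d) then 1 else 0) i : ℕ) : ℝ)) / M)) *
        (2 * (d:ℝ) - 2 * ∑ i, Real.cos (2 * π * k i / M))⁻¹ :=
    Finset.sum_le_sum hterm
  have hfilter : ∑ k ∈ Ks, F (k 0) = ∑ k ∈ K, F (k 0) := by
    rw [hKs]
    apply Finset.sum_filter_of_ne
    intro k _ hne
    intro hk0
    apply hne
    rw [hF, hk0]
    simp
  have htotal : ∑ k ∈ K, F (k 0) = 2 * (M:ℝ)^d := by
    rw [hK, sum_piFinset_comp_apply F]
    have : ∑ a ∈ range M, F a = 2 * M := by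
      rw [hF]
      rw [Finset.sum_sub_distrib, Finset.sum_const, card_range, ← Finset.mul_sum,
        sum_cos_eq_zero hM]
      push_cast; ring
    rw [this]
    have : (M:ℝ)^(d-1) * M = (M:ℝ)^d := by
      rw [← pow_succ]
      congr 1
      omega
    rw [← mul_assoc, mul_comm ((M:ℝ)^(d-1)) 2, mul_assoc, this]
  rw [ReffTorus]
  have hsum_lhs : ∑ k ∈ Ks, F (k 0) * (4 * (d:ℝ))⁻¹ = 2 * (M:ℝ)^d * (4 * (d:ℝ))⁻¹ := by
    rw [← Finset.sum_mul, hfilter, htotal]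
  have hfinal : (1 / (M:ℝ)^d) * (2 * (M:ℝ)^d * (4 * (d:ℝ))⁻¹) = 1/(2*(d:ℝ)) := by
    field_simp
    ring
  rw [← hfinal, ← hsum_lhs]
  exact mul_le_mul_of_nonneg_left hstep (by positivity)


section Upper
variable {d M : ℕ}

/-- the set of "big" coordinates -/
def bigset (M : ℕ) (k : Fin d → ℕ) : Finset (Fin d) :=
  univ.filter (fun i => M ≤ 8 * mm M (k i))

noncomputable def fsum (M : ℕ) (k : Fin d → ℕ) : ℝ := ∑ i, g M (k i)

def maxr (M : ℕ) (k : Fin d → ℕ) : ℕ := univ.sup (fun i => mm M (k i))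

lemma part0_le (hd : 3 ≤ d) (hM : 3 ≤ M) :
    ∑ k ∈ ((Fintype.piFinset fun _ : Fin d => range M).filter (· ≠ 0)).filter
        (fun k => bigset M k = ∅), (fsum M k)⁻¹ ≤ 3 * (M:ℝ)^d / d := by
  classical
  haveI : NeZero d := ⟨by omega⟩
  set t := (M - 1) / 8 with ht
  set T := ((Fintype.piFinset fun _ : Fin d => range M).filter (· ≠ 0)).filter
      (fun k => bigset M k = ∅) with hT
  have hMpos : (0:ℝ) < M := by exact_mod_cast (by omega : 0 < M)
  have hdpos : (0:ℝ) < d := by exact_mod_cast (by omega : 0 < d)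
  -- basic facts about k ∈ T
  have hmem : ∀ k ∈ T, (∀ i, k i < M) ∧ k ≠ 0 ∧ (∀ i, 8 * mm M (k i) < M) := by
    intro k hk
    rw [hT, Finset.mem_filter, Finset.mem_filter] at hk
    obtain ⟨⟨hk1, hk2⟩, hk3⟩ := hk
    refine ⟨fun i => ?_, hk2, fun i => ?_⟩
    · have := Fintype.mem_piFinset.mp hk1 i; simpa [Finset.mem_range] using this
    · by_contra hcon
      have : i ∈ bigset M k := by
        rw [bigset, Finset.mem_filter]; exact ⟨mem_univ i, by omega⟩
      rw [hk3] at this; exact absurd this (Finset.notMem_empty i)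
  have hmaps : ∀ k ∈ T, maxr M k ∈ Icc 1 t := by
    intro k hk
    obtain ⟨hlt, hne, hsm⟩ := hmem k hk
    rw [Finset.mem_Icc]
    constructor
    · obtain ⟨j, hj⟩ := Function.ne_iff.mp hne
      have hkj : 1 ≤ k j := Nat.one_le_iff_ne_zero.mpr (by simpa using hj)
      have h1 : 1 ≤ mm M (k j) := by
        have := hlt j; rw [mm]; omega
      refine le_trans h1 ?_
      exact Finset.le_sup (f := fun i => mm M (k i)) (mem_univ j)
    · apply Finset.sup_le
      intro j _
      have := hsm j; omega
  -- pointwise bound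
  have hpt : ∀ k ∈ T, ∀ r : ℕ, maxr M k = r → (fsum M k)⁻¹ ≤ (M:ℝ)^2 / (8 * r^2) := by
    intro k hk r hr
    obtain ⟨hlt, hne, _⟩ := hmem k hk
    obtain ⟨i0, _, hi0⟩ := Finset.exists_mem_eq_sup univ univ_nonempty
      (fun i => mm M (k i))
    have hri : mm M (k i0) = r := by rw [← hr, maxr, hi0]
    have hr1 : 1 ≤ r := by
      have := hmaps k hk; rw [Finset.mem_Icc] at this; omega
    have hfl : 8 * (r:ℝ)^2 / (M:ℝ)^2 ≤ fsum M k := by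
      calc 8 * (r:ℝ)^2 / (M:ℝ)^2 = 8 * (mm M (k i0) : ℝ)^2 / (M:ℝ)^2 := by rw [hri]
        _ ≤ g M (k i0) := g_ge_sq (by omega) (hlt i0)
        _ ≤ fsum M k := Finset.single_le_sum (fun i _ => g_nonneg M (k i)) (mem_univ i0)
    have hpos : (0:ℝ) < 8 * (r:ℝ)^2 / (M:ℝ)^2 := by
      have : (0:ℝ) < (r:ℝ) := by exact_mod_cast hr1
      positivity
    calc (fsum M k)⁻¹ ≤ (8 * (r:ℝ)^2 / (M:ℝ)^2)⁻¹ := inv_anti₀ hpos hfl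
      _ = (M:ℝ)^2 / (8 * r^2) := by rw [inv_div]
  -- fiber decomposition over maxr
  rw [← Finset.sum_fiberwise_of_maps_to hmaps]
  -- count each fiber
  have hcount : ∀ r ∈ Icc 1 t,
      #(T.filter (fun k => maxr M k = r)) ≤ d * (2 * (2*r+1)^(d-1)) := by
    intro r hr
    have hsub : T.filter (fun k => maxr M k = r) ⊆
        univ.biUnion (fun i : Fin d => Fintype.piFinset (fun j =>
          if j = i then (range M).filter (fun a => mm M a = r)
          else (range M).filter (fun a => mm M a ≤ r))) := by
      intro k hk
      rw [Finset.mem_filter] at hk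
      obtain ⟨hkT, hkr⟩ := hk
      obtain ⟨hlt, _, _⟩ := hmem k hkT
      obtain ⟨i0, _, hi0⟩ := Finset.exists_mem_eq_sup univ univ_nonempty
        (fun i => mm M (k i))
      rw [Finset.mem_biUnion]
      refine ⟨i0, mem_univ i0, ?_⟩
      rw [Fintype.mem_piFinset]
      intro j
      by_cases hj : j = i0
      · rw [if_pos hj, Finset.mem_filter, Finset.mem_range]
        refine ⟨hlt j, ?_⟩
        rw [hj, ← hi0, ← maxr, hkr]
      · rw [if_neg hj, Finset.mem_filter, Finset.mem_range]
        refine ⟨hlt j, ?_⟩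
        rw [← hkr, maxr]
        exact Finset.le_sup (f := fun i => mm M (k i)) (mem_univ j)
    calc #(T.filter (fun k => maxr M k = r))
        ≤ ∑ i : Fin d, #(Fintype.piFinset (fun j =>
            if j = i then (range M).filter (fun a => mm M a = r)
            else (range M).filter (fun a => mm M a ≤ r))) :=
          le_trans (Finset.card_le_card hsub) (Finset.card_biUnion_le)
      _ ≤ ∑ _i : Fin d, 2 * (2*r+1)^(d-1) := by
          apply Finset.sum_le_sum
          intro i _
          rw [Fintype.card_piFinset]
          have hprod : ∏ j : Fin d, #(if j = i
              then (range M).filter (fun a => mm M a = r)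
              else (range M).filter (fun a => mm M a ≤ r))
              = #((range M).filter (fun a => mm M a = r)) *
                ∏ j ∈ univ.erase i, #((range M).filter (fun a => mm M a ≤ r)) := by
            rw [← Finset.mul_prod_erase univ _ (mem_univ i), if_pos rfl]
            congr 1
            apply Finset.prod_congr rfl
            intro j hj
            rw [Finset.mem_erase] at hj
            rw [if_neg hj.1]
          rw [hprod, Finset.prod_const, Finset.card_erase_of_mem (mem_univ i),
            card_univ, Fintype.card_fin]
          exact Nat.mul_le_mul (card_exact_mm M r)
            (Nat.pow_le_pow_left (card_le_filter_mm_le (by omega) r) _)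
      _ = d * (2 * (2*r+1)^(d-1)) := by
          rw [Finset.sum_const, card_univ, Fintype.card_fin, smul_eq_mul]
  -- put together
  have hstep : ∑ r ∈ Icc 1 t, ∑ k ∈ T.filter (fun k => maxr M k = r), (fsum M k)⁻¹
      ≤ ∑ r ∈ Icc 1 t, ((d:ℝ) * 3^(d-1) * (M:ℝ)^2 / 4) * (r:ℝ)^(d-3) := by
    apply Finset.sum_le_sum
    intro r hr
    have hr1 : 1 ≤ r := (Finset.mem_Icc.mp hr).1
    have hrpos : (0:ℝ) < r := by exact_mod_cast hr1
    have hinner : ∑ k ∈ T.filter (fun k => maxr M k = r), (fsum M k)⁻¹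
        ≤ (#(T.filter (fun k => maxr M k = r)) : ℝ) * ((M:ℝ)^2 / (8 * r^2)) := by
      have := Finset.sum_le_card_nsmul (T.filter (fun k => maxr M k = r))
        (fun k => (fsum M k)⁻¹) ((M:ℝ)^2 / (8 * r^2)) ?_
      · simpa [nsmul_eq_mul] using this
      · intro k hk
        rw [Finset.mem_filter] at hk
        exact hpt k hk.1 r hk.2
    have hcard : (#(T.filter (fun k => maxr M k = r)) : ℝ) ≤ (d:ℝ) * (2 * (2*r+1)^(d-1)) := by
      exact_mod_cast hcount r hr
    have hr1c : (1:ℝ) ≤ (r:ℝ) := by exact_mod_cast hr1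
    have h3r : ((2*r+1 : ℕ):ℝ) ≤ 3 * r := by push_cast; linarith
    have hpow : ((2*r+1 : ℕ):ℝ)^(d-1) ≤ (3*(r:ℝ))^(d-1) :=
      pow_le_pow_left₀ (by positivity) h3r _
    calc ∑ k ∈ T.filter (fun k => maxr M k = r), (fsum M k)⁻¹
        ≤ (#(T.filter (fun k => maxr M k = r)) : ℝ) * ((M:ℝ)^2 / (8 * r^2)) := hinner
      _ ≤ ((d:ℝ) * (2 * ((2*r+1:ℕ):ℝ)^(d-1))) * ((M:ℝ)^2 / (8 * r^2)) := by
          apply mul_le_mul_of_nonneg_right _ (by positivity)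
          push_cast at hcard ⊢; linarith
      _ ≤ ((d:ℝ) * (2 * (3*(r:ℝ))^(d-1))) * ((M:ℝ)^2 / (8 * r^2)) := by
          apply mul_le_mul_of_nonneg_right _ (by positivity)
          have : (0:ℝ) ≤ (d:ℝ) * 2 := by positivity
          nlinarith [hpow]
      _ = ((d:ℝ) * 3^(d-1) * (M:ℝ)^2 / 4) * (r:ℝ)^(d-3) := by
          rw [mul_pow]
          have hsplit : (r:ℝ)^(d-1) = (r:ℝ)^(d-3) * (r:ℝ)^2 := by
            rw [← pow_add]
            congr 1
            omega
          rw [hsplit]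
          field_simp
          ring
  have htsum : ∑ r ∈ Icc 1 t, ((d:ℝ) * 3^(d-1) * (M:ℝ)^2 / 4) * (r:ℝ)^(d-3)
      ≤ ((d:ℝ) * 3^(d-1) * (M:ℝ)^2 / 4) * (t:ℝ)^(d-2) := by
    rw [← Finset.mul_sum]
    apply mul_le_mul_of_nonneg_left _ (by positivity)
    have hbound : ∀ r ∈ Icc 1 t, (r:ℝ)^(d-3) ≤ (t:ℝ)^(d-3) := by
      intro r hr
      rw [Finset.mem_Icc] at hr
      exact pow_le_pow_left₀ (by positivity) (by exact_mod_cast hr.2) _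
    calc ∑ r ∈ Icc 1 t, (r:ℝ)^(d-3) ≤ ∑ _r ∈ Icc 1 t, (t:ℝ)^(d-3) :=
          Finset.sum_le_sum hbound
      _ = (t:ℝ) * (t:ℝ)^(d-3) := by
          rw [Finset.sum_const, Nat.card_Icc, nsmul_eq_mul]
          norm_num
      _ = (t:ℝ)^(d-2) := by
          rw [← pow_succ']
          congr 1
          omega
  -- final numeric bound
  have hfin : ((d:ℝ) * 3^(d-1) * (M:ℝ)^2 / 4) * (t:ℝ)^(d-2) ≤ 3 * (M:ℝ)^d / d := by
    have htM : (t:ℝ) ≤ (M:ℝ) / 8 := by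
      have h1 : 8 * t ≤ M := by rw [ht]; omega
      have h2 : 8 * (t:ℝ) ≤ (M:ℝ) := by exact_mod_cast h1
      linarith
    have htpow : (t:ℝ)^(d-2) ≤ ((M:ℝ)/8)^(d-2) :=
      pow_le_pow_left₀ (by positivity) htM _
    have hkeyN : 3^(d-2) * d^2 ≤ 4 * 8^(d-2) := by
      have h := pow_fact (d-3)
      have he1 : d - 3 + 1 = d - 2 := by omega
      have he3 : d - 3 + 3 = d := by omega
      rwa [he1, he3] at h
    have hkey : (3:ℝ)^(d-2) * (d:ℝ)^2 ≤ 4 * 8^(d-2) := by exact_mod_cast hkeyN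
    have hMpow : (M:ℝ)^2 * (M:ℝ)^(d-2) = (M:ℝ)^d := by
      rw [← pow_add]; congr 1; omega
    have h31 : (3:ℝ)^(d-1) = 3 * 3^(d-2) := by
      rw [← pow_succ']; congr 1; omega
    have hMd : (0:ℝ) ≤ (M:ℝ)^d := by positivity
    have hLeq : ((d:ℝ) * 3^(d-1) * (M:ℝ)^2 / 4) * ((M:ℝ)^(d-2)/8^(d-2))
        = (d:ℝ) * 3^(d-1) * (M:ℝ)^d / (4 * 8^(d-2)) := by
      rw [← hMpow]; field_simp
    calc ((d:ℝ) * 3^(d-1) * (M:ℝ)^2 / 4) * (t:ℝ)^(d-2)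
        ≤ ((d:ℝ) * 3^(d-1) * (M:ℝ)^2 / 4) * ((M:ℝ)^(d-2)/8^(d-2)) := by
          apply mul_le_mul_of_nonneg_left _ (by positivity)
          calc (t:ℝ)^(d-2) ≤ ((M:ℝ)/8)^(d-2) := htpow
            _ = (M:ℝ)^(d-2)/8^(d-2) := div_pow _ _ _
      _ = (d:ℝ) * 3^(d-1) * (M:ℝ)^d / (4 * 8^(d-2)) := hLeq
      _ ≤ 3 * (M:ℝ)^d / d := by
          rw [div_le_div_iff₀ (by positivity) hdpos, h31]
          nlinarith [mul_le_mul_of_nonneg_right hkey hMd]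
  calc ∑ r ∈ Icc 1 t, ∑ k ∈ T.filter (fun k => maxr M k = r), (fsum M k)⁻¹
      ≤ ∑ r ∈ Icc 1 t, ((d:ℝ) * 3^(d-1) * (M:ℝ)^2 / 4) * (r:ℝ)^(d-3) := hstep
    _ ≤ ((d:ℝ) * 3^(d-1) * (M:ℝ)^2 / 4) * (t:ℝ)^(d-2) := htsum
    _ ≤ 3 * (M:ℝ)^d / d := hfin


set_option maxHeartbeats 1600000 in
lemma sum_inv_fsum_le (hd : 3 ≤ d) (hM : 3 ≤ M) :
    ∑ k ∈ (Fintype.piFinset fun _ : Fin d => range M).filter (· ≠ 0), (fsum M k)⁻¹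
      ≤ 42 * (M:ℝ)^d / d := by
  classical
  haveI : NeZero d := ⟨by omega⟩
  set Ks := (Fintype.piFinset fun _ : Fin d => range M).filter (· ≠ 0) with hKs
  set bF := (range M).filter (fun a => M ≤ 8 * mm M a) with hbF
  set sF := (range M).filter (fun a => 8 * mm M a < M) with hsF
  have hbs : #bF + #sF = M := by
    have hpart := Finset.card_filter_add_card_filter_not
      (s := range M) (p := fun a => M ≤ 8 * mm M a)
    have heq : (range M).filter (fun a => ¬ M ≤ 8 * mm M a) = sF := by
      rw [hsF]; apply Finset.filter_congr; intro a _; simp [Nat.not_le]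
    rw [heq, Finset.card_range] at hpart
    exact hpart
  have hb5 : 5 * M ≤ 12 * #bF := card_big_ge hM
  have hbpos : (0:ℝ) < (#bF : ℝ) := by
    have : 0 < #bF := by omega
    exact_mod_cast this
  have hMpos : (0:ℝ) < M := by exact_mod_cast (by omega : 0 < M)
  have hdpos : (0:ℝ) < d := by exact_mod_cast (by omega : 0 < d)
  set B : ℕ → ℝ := fun N =>
    if N = 0 then 3*(M:ℝ)^d/d else (#bF:ℝ)^N * (#sF:ℝ)^(d-N) * (8/N) with hB
  have hmapsP : ∀ k ∈ Ks, bigset M k ∈ (univ : Finset (Fin d)).powerset :=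
    fun k _ => Finset.mem_powerset.mpr (Finset.filter_subset _ _)
  rw [← Finset.sum_fiberwise_of_maps_to hmapsP (fun k => (fsum M k)⁻¹)]
  -- bound each fiber
  have hA : ∀ A ∈ (univ : Finset (Fin d)).powerset,
      ∑ k ∈ Ks.filter (fun k => bigset M k = A), (fsum M k)⁻¹ ≤ B #A := by
    intro A _
    by_cases hA0 : A = ∅
    · rw [hA0]
      have : B #(∅ : Finset (Fin d)) = 3*(M:ℝ)^d/d := by
        rw [hB]; simp
      rw [this]
      exact part0_le hd hM
    · have hne : A.Nonempty := Finset.nonempty_iff_ne_empty.mpr hA0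
      have hNpos : 0 < #A := Finset.card_pos.mpr hne
      have hBval : B #A = (#bF:ℝ)^#A * (#sF:ℝ)^(d-#A) * (8/#A) := by
        rw [hB]; simp only [if_neg (by omega : ¬ #A = 0)]
      rw [hBval]
      -- pointwise bound
      have hpt : ∀ k ∈ Ks.filter (fun k => bigset M k = A),
          (fsum M k)⁻¹ ≤ 8/(#A:ℝ) := by
        intro k hk
        rw [Finset.mem_filter] at hk
        obtain ⟨hkKs, hkA⟩ := hk
        rw [hKs, Finset.mem_filter] at hkKs
        have hlt : ∀ i, k i < M := by
          intro i
          have := Fintype.mem_piFinset.mp hkKs.1 i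
          simpa [Finset.mem_range] using this
        have hbig : ∀ i ∈ A, M ≤ 8 * mm M (k i) := by
          intro i hi
          rw [← hkA, bigset, Finset.mem_filter] at hi
          exact hi.2
        have hge : (#A:ℝ) * (1/8) ≤ fsum M k := by
          calc (#A:ℝ) * (1/8) = #A • (1/8 : ℝ) := by rw [nsmul_eq_mul]
            _ ≤ ∑ i ∈ A, g M (k i) :=
              Finset.card_nsmul_le_sum A _ _ (fun i hi =>
                g_ge_eighth (by omega) (hlt i) (hbig i hi))
            _ ≤ ∑ i, g M (k i) :=
              Finset.sum_le_sum_of_subset_of_nonneg (Finset.subset_univ A)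
                (fun i _ _ => g_nonneg M (k i))
            _ = fsum M k := rfl
        have hApos : (0:ℝ) < (#A:ℝ) := by exact_mod_cast hNpos
        calc (fsum M k)⁻¹ ≤ ((#A:ℝ) * (1/8))⁻¹ :=
              inv_anti₀ (by positivity) hge
          _ = 8/(#A:ℝ) := by field_simp
      -- fiber cardinality
      have hcard : #(Ks.filter (fun k => bigset M k = A)) ≤ #bF ^ #A * #sF ^ (d - #A) := by
        have hsubP : Ks.filter (fun k => bigset M k = A) ⊆
            Fintype.piFinset (fun i => if i ∈ A then bF else sF) := by
          intro k hk
          rw [Finset.mem_filter] at hk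
          obtain ⟨hkKs, hkA⟩ := hk
          rw [hKs, Finset.mem_filter] at hkKs
          have hlt : ∀ i, k i ∈ range M := Fintype.mem_piFinset.mp hkKs.1
          rw [Fintype.mem_piFinset]
          intro i
          by_cases hi : i ∈ A
          · rw [if_pos hi, hbF, Finset.mem_filter]
            rw [← hkA, bigset, Finset.mem_filter] at hi
            exact ⟨hlt i, hi.2⟩
          · rw [if_neg hi, hsF, Finset.mem_filter]
            refine ⟨hlt i, ?_⟩
            rw [← hkA, bigset, Finset.mem_filter] at hi
            push_neg at hi
            have := hi (mem_univ i)
            omega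
        calc #(Ks.filter (fun k => bigset M k = A))
            ≤ #(Fintype.piFinset (fun i => if i ∈ A then bF else sF)) :=
              Finset.card_le_card hsubP
          _ = ∏ i : Fin d, #(if i ∈ A then bF else sF) := Fintype.card_piFinset _
          _ = #bF ^ #A * #sF ^ (d - #A) := by
              simp only [apply_ite Finset.card]
              rw [← Finset.prod_mul_prod_compl A]
              have h1 : ∏ i ∈ A, (if i ∈ A then #bF else #sF) = #bF ^ #A := by
                rw [Finset.prod_congr rfl (fun i hi => if_pos hi), Finset.prod_const]
              have h2 : ∏ i ∈ Aᶜ, (if i ∈ A then #bF else #sF) = #sF ^ (d - #A) := by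
                rw [Finset.prod_congr rfl (fun i hi => if_neg (Finset.mem_compl.mp hi)),
                  Finset.prod_const, Finset.card_compl, Fintype.card_fin]
              rw [h1, h2]
      calc ∑ k ∈ Ks.filter (fun k => bigset M k = A), (fsum M k)⁻¹
          ≤ #(Ks.filter (fun k => bigset M k = A)) • (8/(#A:ℝ)) :=
            Finset.sum_le_card_nsmul _ _ _ hpt
        _ = (#(Ks.filter (fun k => bigset M k = A)) : ℝ) * (8/(#A:ℝ)) := nsmul_eq_mul _ _
        _ ≤ ((#bF ^ #A * #sF ^ (d - #A) : ℕ) : ℝ) * (8/(#A:ℝ)) := by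
            apply mul_le_mul_of_nonneg_right _ (by positivity)
            exact_mod_cast hcard
        _ = (#bF:ℝ)^#A * (#sF:ℝ)^(d-#A) * (8/#A) := by push_cast; ring
  -- sum over the powerset, grouped by cardinality
  have hgroup : ∑ A ∈ (univ : Finset (Fin d)).powerset, B #A
      = ∑ N ∈ range (d+1), (d.choose N) • B N := by
    rw [Finset.sum_powerset]
    rw [card_univ, Fintype.card_fin]
    apply Finset.sum_congr rfl
    intro N _
    rw [Finset.sum_powersetCard N univ B, card_univ, Fintype.card_fin]
  have htail : ∑ N ∈ range (d+1), (d.choose N) • B N ≤ 42 * (M:ℝ)^d / d := by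
    have hsmul : ∀ N, (d.choose N) • B N = (d.choose N : ℝ) * B N :=
      fun N => nsmul_eq_mul _ _
    simp only [hsmul]
    rw [Finset.sum_range_succ' (fun N => (d.choose N : ℝ) * B N) d]
    have hB0 : (d.choose 0 : ℝ) * B 0 = 3*(M:ℝ)^d/d := by
      rw [hB]; simp
    rw [hB0]
    -- main binomial part
    have hmain : ∑ N ∈ range d, (d.choose (N+1) : ℝ) * B (N+1) ≤ 39 * (M:ℝ)^d / d := by
      have hBv : ∀ N, B (N+1) = (#bF:ℝ)^(N+1) * (#sF:ℝ)^(d-(N+1)) * (8/(N+1)) := by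
        intro N; simp only [hB, Nat.succ_ne_zero, if_false]; push_cast; ring
      have hptw : ∀ N ∈ range d, (d.choose (N+1) : ℝ) * B (N+1)
          ≤ (16/((d:ℝ)+1)) * (((d+1).choose (N+2) : ℝ) * (#bF:ℝ)^(N+1) * (#sF:ℝ)^(d-(N+1))) := by
        intro N _
        rw [hBv N]
        have hcr : 8 * (((d:ℝ)+1) * (d.choose (N+1) : ℝ))
            ≤ 16 * (((N:ℝ)+1) * ((d+1).choose (N+2) : ℝ)) := by
          exact_mod_cast choose_ratio d N
        have hfrac : (d.choose (N+1) : ℝ) * (8/((N:ℝ)+1))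
            ≤ (16/((d:ℝ)+1)) * ((d+1).choose (N+2) : ℝ) := by
          have h16 : (16/((d:ℝ)+1)) * ((d+1).choose (N+2) : ℝ)
              = (16 * ((d+1).choose (N+2) : ℝ))/((d:ℝ)+1) := by ring
          rw [mul_div_assoc', h16, div_le_div_iff₀ (by positivity) (by positivity)]
          nlinarith [hcr]
        have hnn : (0:ℝ) ≤ (#bF:ℝ)^(N+1) * (#sF:ℝ)^(d-(N+1)) := by positivity
        calc (d.choose (N+1) : ℝ) * ((#bF:ℝ)^(N+1) * (#sF:ℝ)^(d-(N+1)) * (8/(N+1)))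
            = ((d.choose (N+1) : ℝ) * (8/((N:ℝ)+1))) * ((#bF:ℝ)^(N+1) * (#sF:ℝ)^(d-(N+1))) := by
              push_cast; ring
          _ ≤ ((16/((d:ℝ)+1)) * ((d+1).choose (N+2) : ℝ)) * ((#bF:ℝ)^(N+1) * (#sF:ℝ)^(d-(N+1))) :=
              mul_le_mul_of_nonneg_right hfrac hnn
          _ = (16/((d:ℝ)+1)) * (((d+1).choose (N+2) : ℝ) * (#bF:ℝ)^(N+1) * (#sF:ℝ)^(d-(N+1))) := by
              ring
      have hsum2 : ∑ N ∈ range d, ((d+1).choose (N+2) : ℝ) * (#bF:ℝ)^(N+1) * (#sF:ℝ)^(d-(N+1))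
          ≤ (M:ℝ)^(d+1) / (#bF:ℝ) := by
        rw [le_div_iff₀ hbpos]
        have hcastsum : (∑ N ∈ range d, ((d+1).choose (N+2) : ℝ) * (#bF:ℝ)^(N+1) * (#sF:ℝ)^(d-(N+1))) * (#bF:ℝ)
            = ((∑ N ∈ range d, (d+1).choose (N+2) * (#bF^(N+2) * #sF^(d-(N+1))) : ℕ) : ℝ) := by
          push_cast
          rw [Finset.sum_mul]
          apply Finset.sum_congr rfl
          intro N _
          rw [pow_succ ((#bF:ℝ)) (N+1)]
          ring
        rw [hcastsum]
        have := binom_sum_le2 d #bF #sF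
        rw [hbs] at this
        exact_mod_cast this
      calc ∑ N ∈ range d, (d.choose (N+1) : ℝ) * B (N+1)
          ≤ ∑ N ∈ range d, (16/((d:ℝ)+1)) * (((d+1).choose (N+2) : ℝ) * (#bF:ℝ)^(N+1) * (#sF:ℝ)^(d-(N+1))) :=
            Finset.sum_le_sum hptw
        _ = (16/((d:ℝ)+1)) * ∑ N ∈ range d, ((d+1).choose (N+2) : ℝ) * (#bF:ℝ)^(N+1) * (#sF:ℝ)^(d-(N+1)) := by
            rw [Finset.mul_sum]
        _ ≤ (16/((d:ℝ)+1)) * ((M:ℝ)^(d+1) / (#bF:ℝ)) := by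
            apply mul_le_mul_of_nonneg_left hsum2 (by positivity)
        _ ≤ 39 * (M:ℝ)^d / d := by
            have hMb : (M:ℝ) / (#bF:ℝ) ≤ 12/5 := by
              rw [div_le_div_iff₀ hbpos (by norm_num)]
              have : (5:ℝ) * M ≤ 12 * (#bF:ℝ) := by exact_mod_cast hb5
              linarith
            have hpows : (M:ℝ)^(d+1) / (#bF:ℝ) = (M:ℝ)^d * ((M:ℝ)/(#bF:ℝ)) := by
              rw [pow_succ]; field_simp
            rw [hpows]
            have h1 : (16/((d:ℝ)+1)) * ((M:ℝ)^d * ((M:ℝ)/(#bF:ℝ)))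
                ≤ (16/((d:ℝ)+1)) * ((M:ℝ)^d * (12/5)) := by
              apply mul_le_mul_of_nonneg_left _ (by positivity)
              apply mul_le_mul_of_nonneg_left hMb (by positivity)
            refine le_trans h1 ?_
            have hgoal : 16 / ((d:ℝ) + 1) * ((M:ℝ)^d * (12/5)) = (192/5) * (M:ℝ)^d / ((d:ℝ)+1) := by
              ring
            rw [hgoal, div_le_div_iff₀ (by positivity) hdpos]
            have hMdnn : (0:ℝ) ≤ (M:ℝ)^d := by positivity
            nlinarith [mul_nonneg hdpos.le hMdnn, hMdnn]
    have h42 : 39 * (M:ℝ)^d / d + 3 * (M:ℝ)^d / d = 42 * (M:ℝ)^d / d := by ring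
    linarith [hmain, h42]
  calc ∑ A ∈ (univ : Finset (Fin d)).powerset,
        ∑ k ∈ Ks.filter (fun k => bigset M k = A), (fsum M k)⁻¹
      ≤ ∑ A ∈ (univ : Finset (Fin d)).powerset, B #A := Finset.sum_le_sum hA
    _ = ∑ N ∈ range (d+1), (d.choose N) • B N := hgroup
    _ ≤ 42 * (M:ℝ)^d / d := htail


end Upper

lemma reff_upper {d M : ℕ} (hd : 3 ≤ d) (hM : 3 ≤ M) (v : Fin d → ℕ) :
    ReffTorus d M v ≤ 84 / d := by
  classical
  have hMpos : (0:ℝ) < M := by exact_mod_cast (by omega : 0 < M)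
  have hdpos : (0:ℝ) < d := by exact_mod_cast (by omega : 0 < d)
  rw [ReffTorus]
  have hpt : ∀ k ∈ (Fintype.piFinset fun _ : Fin d => range M).filter (· ≠ 0),
      (2 - 2 * Real.cos (2 * π * (∑ i, (k i : ℝ) * (v i : ℝ)) / M)) *
        (2 * (d:ℝ) - 2 * ∑ i, Real.cos (2 * π * k i / M))⁻¹
        ≤ 2 * (fsum M k)⁻¹ := by
    intro k hk
    rw [Finset.mem_filter] at hk
    have hfpos : 0 < ∑ i, g M (k i) := sum_g_pos hM hk.1 hk.2
    rw [denom_eq k]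
    have hnum_le : 2 - 2 * Real.cos (2 * π * (∑ i, (k i : ℝ) * (v i : ℝ)) / M) ≤ 4 := by
      have := Real.neg_one_le_cos (2 * π * (∑ i, (k i : ℝ) * (v i : ℝ)) / M)
      linarith
    have hinvnn : (0:ℝ) ≤ (2 * ∑ i, g M (k i))⁻¹ := by positivity
    calc (2 - 2 * Real.cos (2 * π * (∑ i, (k i : ℝ) * (v i : ℝ)) / M)) *
          (2 * ∑ i, g M (k i))⁻¹
        ≤ 4 * (2 * ∑ i, g M (k i))⁻¹ := mul_le_mul_of_nonneg_right hnum_le hinvnn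
      _ = 2 * (fsum M k)⁻¹ := by
          rw [mul_inv]
          rw [fsum]
          ring
  have hsum : ∑ k ∈ (Fintype.piFinset fun _ : Fin d => range M).filter (· ≠ 0),
      (2 - 2 * Real.cos (2 * π * (∑ i, (k i : ℝ) * (v i : ℝ)) / M)) *
        (2 * (d:ℝ) - 2 * ∑ i, Real.cos (2 * π * k i / M))⁻¹
      ≤ 84 * (M:ℝ)^d / d := by
    calc ∑ k ∈ (Fintype.piFinset fun _ : Fin d => range M).filter (· ≠ 0),
        (2 - 2 * Real.cos (2 * π * (∑ i, (k i : ℝ) * (v i : ℝ)) / M)) *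
          (2 * (d:ℝ) - 2 * ∑ i, Real.cos (2 * π * k i / M))⁻¹
        ≤ ∑ k ∈ (Fintype.piFinset fun _ : Fin d => range M).filter (· ≠ 0),
            2 * (fsum M k)⁻¹ := Finset.sum_le_sum hpt
      _ = 2 * ∑ k ∈ (Fintype.piFinset fun _ : Fin d => range M).filter (· ≠ 0),
            (fsum M k)⁻¹ := by rw [Finset.mul_sum]
      _ ≤ 2 * (42 * (M:ℝ)^d / d) :=
          mul_le_mul_of_nonneg_left (sum_inv_fsum_le hd hM) (by norm_num)
      _ = 84 * (M:ℝ)^d / d := by ring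
  calc (1 / (M:ℝ)^d) * ∑ k ∈ (Fintype.piFinset fun _ : Fin d => range M).filter (· ≠ 0),
        (2 - 2 * Real.cos (2 * π * (∑ i, (k i : ℝ) * (v i : ℝ)) / M)) *
          (2 * (d:ℝ) - 2 * ∑ i, Real.cos (2 * π * k i / M))⁻¹
      ≤ (1 / (M:ℝ)^d) * (84 * (M:ℝ)^d / d) :=
        mul_le_mul_of_nonneg_left hsum (by positivity)
    _ = 84 / d := by field_simp


end CRRST

open CRRST in
/-- Theorem 6.1 of Chandra–Raghavan–Ruzzo–Smolensky–Tiwari (1989):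
`R_max(T_{M^d}) = Θ(1/d)` uniformly in `M`. -/
theorem torus_max_resistance_theta_one_over_d :
    ∃ C : ℝ, 0 < C ∧ ∀ d M : ℕ, 3 ≤ d → 3 ≤ M →
      RmaxTorus d M ≤ C / d ∧ 1 / (C * d) ≤ RmaxTorus d M := by
  classical
  refine ⟨100, by norm_num, ?_⟩
  intro d M hd hM
  haveI : NeZero d := ⟨by omega⟩
  have hdpos : (0:ℝ) < d := by exact_mod_cast (by omega : 0 < d)
  have hMpos : 0 < M := by omega
  set S : Set (Fin d → ℕ) :=
    {v : Fin d → ℕ | v ∈ Fintype.piFinset (fun _ : Fin d => Finset.range M) ∧ v ≠ 0} with hS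
  have hSfin : S.Finite := by
    apply Set.Finite.subset (Fintype.piFinset (fun _ : Fin d => Finset.range M)).finite_toSet
    intro v hv
    exact hv.1
  constructor
  · -- upper bound
    rw [RmaxTorus]
    apply Real.sSup_le
    · rintro x ⟨v, hv, rfl⟩
      calc ReffTorus d M v ≤ 84 / d := reff_upper hd hM v
        _ ≤ 100 / d := by gcongr <;> norm_num
    · positivity
  · -- lower bound
    rw [RmaxTorus]
    set v₀ : Fin d → ℕ := fun i => if i = (0 : Fin d) then 1 else 0 with hv₀
    have hv₀S : v₀ ∈ S := by
      constructor
      · rw [Fintype.mem_piFinset]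
        intro i
        rw [Finset.mem_range, hv₀]
        by_cases h : i = 0 <;> simp [h] <;> omega
      · intro hcon
        have := congrFun hcon 0
        rw [hv₀] at this
        simp at this
    have hmem : ReffTorus d M v₀ ∈ ReffTorus d M '' S := Set.mem_image_of_mem _ hv₀S
    have hbdd : BddAbove (ReffTorus d M '' S) := (hSfin.image _).bddAbove
    calc 1 / (100 * (d:ℝ)) ≤ 1 / (2 * (d:ℝ)) := by
          apply one_div_le_one_div_of_le (by positivity)
          linarith
      _ ≤ ReffTorus d M v₀ := reff_lower hd hM
      _ ≤ sSup (ReffTorus d M '' S) := le_csSup hbdd hmem
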